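/- Let V₁, …, V_m ∈ ℂ^{m×m} be Hermitian positive definite. Then the surrogate function ℒ(W) = Σᵢ wᵢ* Vᵢ wᵢ − log |det W|², where W = [w₁, …, w_m]* ranges over GL(m, ℂ), is bounded below. -/

import Mathlib

open Matrix
open scoped ComplexOrder

lemma quad_lb {n : Type*} [Fintype n] [DecidableEq n] [Nonempty n]
    (V : Matrix n n ℂ) (hV : V.PosDef) :
    ∃ c : ℝ, 0 < c ∧ ∀ x : n → ℂ, c * (∑ j, ‖x j‖ ^ 2) ≤ (star x ⬝ᵥ V.mulVec x).re := by
  classical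
  set g : (n → ℂ) → ℝ := fun x => (star x ⬝ᵥ V.mulVec x).re with hg
  have hcont : Continuous g := by
    apply Complex.continuous_re.comp
    exact (continuous_star).dotProduct (continuous_const.matrix_mulVec continuous_id)
  set S : Set (n → ℂ) := {x | (∑ j, ‖x j‖ ^ 2) = 1} with hS
  have hSne : S.Nonempty := by
    refine ⟨Pi.single (Classical.arbitrary n) 1, ?_⟩
    simp [hS, Pi.single_apply, apply_ite]
  have hclosed : IsClosed S := by
    have : Continuous fun x : n → ℂ => ∑ j, ‖x j‖ ^ 2 := by fun_prop
    exact isClosed_eq this continuous_const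
  have hbdd : Bornology.IsBounded S := by
    apply Bornology.IsBounded.subset (Metric.isBounded_closedBall (x := (0 : n → ℂ)) (r := 1))
    intro x hx
    simp only [Metric.mem_closedBall, dist_zero_right]
    rw [pi_norm_le_iff_of_nonneg zero_le_one]
    intro i
    have h1 : ‖x i‖ ^ 2 ≤ 1 := by
      rw [← hx]
      exact Finset.single_le_sum (f := fun j => ‖x j‖ ^ 2)
        (fun j _ => sq_nonneg _) (Finset.mem_univ i)
    nlinarith [norm_nonneg (x i)]
  have hcompact : IsCompact S := Metric.isCompact_of_isClosed_isBounded hclosed hbdd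
  obtain ⟨x₀, hx₀S, hmin⟩ := hcompact.exists_isMinOn hSne hcont.continuousOn
  have hx₀ne : x₀ ≠ 0 := by
    intro h
    rw [hS] at hx₀S
    simp [h] at hx₀S
  have hc : 0 < g x₀ := by
    have := hV.dotProduct_mulVec_pos hx₀ne
    exact (Complex.lt_def.mp this).1
  refine ⟨g x₀, hc, fun x => ?_⟩
  rcases eq_or_ne x 0 with rfl | hx
  · simp [hg]
  · have hsum : 0 < ∑ j, ‖x j‖ ^ 2 := by
      have : ∃ j, x j ≠ 0 := by
        by_contra h
        push_neg at h
        exact hx (funext h)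
      obtain ⟨j, hj⟩ := this
      have : 0 < ‖x j‖ ^ 2 := pow_pos (norm_pos_iff.mpr hj) 2
      exact lt_of_lt_of_le this (Finset.single_le_sum (f := fun j => ‖x j‖ ^ 2)
        (fun j _ => sq_nonneg _) (Finset.mem_univ j))
    set r : ℝ := Real.sqrt (∑ j, ‖x j‖ ^ 2) with hr
    have hrpos : 0 < r := Real.sqrt_pos.mpr hsum
    have hr2 : r ^ 2 = ∑ j, ‖x j‖ ^ 2 := Real.sq_sqrt hsum.le
    set u : n → ℂ := ((r : ℂ))⁻¹ • x with hu
    have huS : u ∈ S := by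
      rw [hS, Set.mem_setOf_eq]
      have : ∀ j, ‖u j‖ ^ 2 = r⁻¹ ^ 2 * ‖x j‖ ^ 2 := by
        intro j
        simp [hu, norm_smul, mul_pow, abs_of_pos hrpos]
      rw [Finset.sum_congr rfl fun j _ => this j, ← Finset.mul_sum, ← hr2]
      field_simp
    have hgu : g x = r ^ 2 * g u := by
      have hx_eq : x = (r : ℂ) • u := by
        rw [hu, smul_smul]
        rw [mul_inv_cancel₀ (by exact_mod_cast hrpos.ne')]
        simp
      have key : star x ⬝ᵥ V *ᵥ x = ((r ^ 2 : ℝ) : ℂ) * (star u ⬝ᵥ V *ᵥ u) := by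
        rw [hx_eq, star_smul, mulVec_smul, dotProduct_smul, smul_dotProduct]
        simp only [smul_eq_mul, Complex.star_def, Complex.conj_ofReal]
        push_cast
        ring
      show (star x ⬝ᵥ V *ᵥ x).re = r ^ 2 * (star u ⬝ᵥ V *ᵥ u).re
      rw [key, Complex.re_ofReal_mul]
    calc g x₀ * ∑ j, ‖x j‖ ^ 2 = g x₀ * r ^ 2 := by rw [hr2]
      _ ≤ g u * r ^ 2 := by
          exact mul_le_mul_of_nonneg_right (hmin huS) (sq_nonneg r)
      _ = g x := by rw [hgu]; ring

/-- The IVA surrogate `ℒ(W) = Σᵢ wᵢ* Vᵢ wᵢ − log|det W|²` (rows of `W` are `wᵢ*`)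
with Hermitian positive definite `Vᵢ` is bounded below on `GL(m, ℂ)`. -/
theorem stmt12 (m : ℕ) (V : Fin m → Matrix (Fin m) (Fin m) ℂ)
    (hV : ∀ i, (V i).PosDef) :
    let L : Matrix (Fin m) (Fin m) ℂ → ℝ := fun W =>
      (∑ i, (W i ⬝ᵥ (V i).mulVec (star (W i))).re) -
        Real.log (‖W.det‖ ^ 2)
    ∃ c : ℝ, ∀ W : Matrix (Fin m) (Fin m) ℂ, IsUnit W → c ≤ L W := by
  intro L
  have hq : ∀ i : Fin m, ∃ c : ℝ, 0 < c ∧ ∀ x : Fin m → ℂ,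
      c * (∑ j, ‖x j‖ ^ 2) ≤ (star x ⬝ᵥ (V i).mulVec x).re := fun i =>
    haveI : Nonempty (Fin m) := ⟨i⟩
    quad_lb (V i) (hV i)
  choose c hcpos hc using hq
  refine ⟨(∑ i, (1 + Real.log (c i))) - Real.log ((m.factorial : ℝ) ^ 2), fun W hW => ?_⟩
  have hdet : W.det ≠ 0 := by
    have := (Matrix.isUnit_iff_isUnit_det W).mp hW
    exact isUnit_iff_ne_zero.mp this
  set nsq : Fin m → ℝ := fun i => ∑ j, ‖W i j‖ ^ 2 with hnsq
  have hnsq_pos : ∀ i, 0 < nsq i := by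
    intro i
    have hrow : W i ≠ 0 := fun hrow =>
      hdet (Matrix.det_eq_zero_of_row_eq_zero i (fun j => by rw [hrow]; rfl))
    obtain ⟨j, hj⟩ : ∃ j, W i j ≠ 0 := by
      by_contra h
      push_neg at h
      exact hrow (funext h)
    exact Finset.sum_pos' (fun j _ => sq_nonneg _)
      ⟨j, Finset.mem_univ j, pow_pos (norm_pos_iff.mpr hj) 2⟩
  -- quadratic lower bound per row
  have hquad : ∀ i, c i * nsq i ≤ (W i ⬝ᵥ (V i).mulVec (star (W i))).re := by
    intro i
    have := hc i (star (W i))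
    simpa [hnsq] using this
  -- Hadamard-type bound
  have hhad : ‖W.det‖ ≤ (m.factorial : ℝ) * ∏ i, Real.sqrt (nsq i) := by
    have hentry : ∀ a b : Fin m, ‖W a b‖ ≤ Real.sqrt (nsq a) := by
      intro a b
      rw [show ‖W a b‖ = Real.sqrt (‖W a b‖ ^ 2) by rw [Real.sqrt_sq (norm_nonneg _)]]
      exact Real.sqrt_le_sqrt (Finset.single_le_sum (f := fun j => ‖W a j‖ ^ 2)
        (fun j _ => sq_nonneg _) (Finset.mem_univ b))
    calc ‖W.det‖
        = ‖∑ σ : Equiv.Perm (Fin m), (Equiv.Perm.sign σ : ℤ) * ∏ i, W (σ i) i‖ := by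
          rw [Matrix.det_apply']
      _ ≤ ∑ σ : Equiv.Perm (Fin m), ‖((Equiv.Perm.sign σ : ℤ) : ℂ) * ∏ i, W (σ i) i‖ :=
          norm_sum_le _ _
      _ ≤ ∑ σ : Equiv.Perm (Fin m), ∏ i, Real.sqrt (nsq i) := by
          apply Finset.sum_le_sum
          intro σ _
          rw [norm_mul]
          have h1 : ‖((Equiv.Perm.sign σ : ℤ) : ℂ)‖ = 1 := by
            rcases Int.units_eq_one_or (Equiv.Perm.sign σ) with h | h <;> simp [h]
          rw [h1, one_mul, norm_prod]
          calc ∏ i, ‖W (σ i) i‖ ≤ ∏ i, Real.sqrt (nsq (σ i)) :=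
                Finset.prod_le_prod (fun i _ => norm_nonneg _) (fun i _ => hentry (σ i) i)
            _ = ∏ i, Real.sqrt (nsq i) := Equiv.prod_comp σ (fun i => Real.sqrt (nsq i))
      _ = (m.factorial : ℝ) * ∏ i, Real.sqrt (nsq i) := by
          rw [Finset.sum_const, Finset.card_univ, Fintype.card_perm, Fintype.card_fin,
            nsmul_eq_mul]
  -- log bound
  have hlog : Real.log (‖W.det‖ ^ 2) ≤
      Real.log ((m.factorial : ℝ) ^ 2) + ∑ i, Real.log (nsq i) := by
    have habs : 0 < ‖W.det‖ := by
      simpa using norm_pos_iff.mpr hdet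
    have hfac : (0 : ℝ) < (m.factorial : ℝ) := by exact_mod_cast m.factorial_pos
    have hsq : ‖W.det‖ ^ 2 ≤ (m.factorial : ℝ) ^ 2 * ∏ i, nsq i := by
      have h2 : ((m.factorial : ℝ) * ∏ i, Real.sqrt (nsq i)) ^ 2
          = (m.factorial : ℝ) ^ 2 * ∏ i, nsq i := by
        rw [mul_pow, ← Finset.prod_pow]
        congr 1
        exact Finset.prod_congr rfl fun i _ => Real.sq_sqrt (hnsq_pos i).le
      rw [← h2]
      exact pow_le_pow_left₀ habs.le hhad 2
    calc Real.log (‖W.det‖ ^ 2)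
        ≤ Real.log ((m.factorial : ℝ) ^ 2 * ∏ i, nsq i) :=
          Real.log_le_log (pow_pos habs 2) hsq
      _ = Real.log ((m.factorial : ℝ) ^ 2) + ∑ i, Real.log (nsq i) := by
          rw [Real.log_mul (by positivity)
              (Finset.prod_pos (fun i _ => hnsq_pos i)).ne',
            Real.log_prod (fun i _ => (hnsq_pos i).ne')]
  -- pointwise convexity bound
  have hpt : ∀ i, 1 + Real.log (c i) ≤ c i * nsq i - Real.log (nsq i) := by
    intro i
    have h1 : Real.log (c i * nsq i) ≤ c i * nsq i - 1 :=
      Real.log_le_sub_one_of_pos (mul_pos (hcpos i) (hnsq_pos i))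
    rw [Real.log_mul (hcpos i).ne' (hnsq_pos i).ne'] at h1
    linarith
  -- assemble
  have hmain : ∑ i, (1 + Real.log (c i)) ≤ ∑ i, (c i * nsq i - Real.log (nsq i)) :=
    Finset.sum_le_sum fun i _ => hpt i
  have hsum : ∑ i, c i * nsq i ≤ ∑ i, (W i ⬝ᵥ (V i).mulVec (star (W i))).re :=
    Finset.sum_le_sum fun i _ => hquad i
  simp only [L]
  rw [Finset.sum_sub_distrib] at hmain
  linarith
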